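/- Let K ⊆ L be a field extension and (A_i), (B_i) two families of n×n matrices over K indexed by the same set I. Then (A_i) and (B_i) are simultaneously similar over K (i.e. there is P ∈ GL_n(K) with P A_i P^{-1} = B_i for all i) if and only if they are simultaneously similar over L. -/

import Mathlib

open Matrix

namespace ND


variable {K : Type*} [Field K] {n : ℕ} {I : Type*}

noncomputable def phi (C : Type*) [CommRing C] [Algebra K C]
    (A : I → Matrix (Fin n) (Fin n) K) :
    FreeAlgebra K I →ₐ[K] Matrix (Fin n) (Fin n) C :=
  FreeAlgebra.lift K (fun i => (A i).map (algebraMap K C))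

@[simp] lemma phi_iota (C : Type*) [CommRing C] [Algebra K C]
    (A : I → Matrix (Fin n) (Fin n) K) (i : I) :
    phi C A (FreeAlgebra.ι K i) = (A i).map (algebraMap K C) := by
  simp [phi]

def Rep (C : Type*) (_A : I → Matrix (Fin n) (Fin n) K) : Type _ := Fin n → C

instance (C : Type*) [CommRing C] (A : I → Matrix (Fin n) (Fin n) K) :
    AddCommGroup (Rep C A) := inferInstanceAs (AddCommGroup (Fin n → C))

instance (C : Type*) [CommRing C] (A : I → Matrix (Fin n) (Fin n) K) [Finite C] :
    Finite (Rep C A) := inferInstanceAs (Finite (Fin n → C))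

instance (C : Type*) [CommRing C] (A : I → Matrix (Fin n) (Fin n) K) :
    Module C (Rep C A) := inferInstanceAs (Module C (Fin n → C))

noncomputable instance (C : Type*) [CommRing C] [Algebra K C]
    (A : I → Matrix (Fin n) (Fin n) K) : Module (FreeAlgebra K I) (Rep C A) :=
  Module.compHom (Fin n → C)
    (((Matrix.toLinAlgEquiv' :
        Matrix (Fin n) (Fin n) C ≃ₐ[C] Module.End C (Fin n → C)).toAlgHom.toRingHom).comp
      (phi C A).toRingHom)

lemma rep_smul (C : Type*) [CommRing C] [Algebra K C] (A : I → Matrix (Fin n) (Fin n) K)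
    (r : FreeAlgebra K I) (v : Rep C A) :
    r • v = (phi C A r).mulVec v := by
  show Matrix.toLinAlgEquiv' (phi C A r) v = _
  erw [Matrix.toLinAlgEquiv'_apply]

section Bridge

variable (C : Type*) [CommRing C] [Algebra K C] (A B : I → Matrix (Fin n) (Fin n) K)

lemma key_comm {X : Matrix (Fin n) (Fin n) C}
    (hX : ∀ i, X * (A i).map (algebraMap K C) = (B i).map (algebraMap K C) * X) :
    ∀ r : FreeAlgebra K I, X * phi C A r = phi C B r * X := by
  intro r
  induction r using FreeAlgebra.induction with
  | grade0 k => rw [AlgHom.commutes, AlgHom.commutes, Algebra.commutes]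
  | grade1 i => rw [phi_iota, phi_iota]; exact hX i
  | mul a b ha hb => rw [_root_.map_mul, _root_.map_mul, ← mul_assoc, ha, mul_assoc, hb, mul_assoc]
  | add a b ha hb => rw [_root_.map_add, _root_.map_add, mul_add, add_mul, ha, hb]

/-- An intertwining matrix gives a linear map of representations. -/
noncomputable def matHom (X : Matrix (Fin n) (Fin n) C)
    (hX : ∀ i, X * (A i).map (algebraMap K C) = (B i).map (algebraMap K C) * X) :
    Rep C A →ₗ[FreeAlgebra K I] Rep C B where
  toFun v := X.mulVec v
  map_add' u v := Matrix.mulVec_add X u v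
  map_smul' r v := by
    simp only [RingHom.id_apply]
    erw [rep_smul, rep_smul, Matrix.mulVec_mulVec, Matrix.mulVec_mulVec, key_comm C A B hX r]

/-- An intertwining invertible matrix gives an equivalence of representations. -/
noncomputable def matEquiv (X : (Matrix (Fin n) (Fin n) C)ˣ)
    (hX : ∀ i, (X : Matrix (Fin n) (Fin n) C) * (A i).map (algebraMap K C)
        = (B i).map (algebraMap K C) * X) :
    Rep C A ≃ₗ[FreeAlgebra K I] Rep C B :=
  { matHom C A B X.val hX with
    invFun := fun v => Matrix.mulVec (↑X⁻¹ : Matrix (Fin n) (Fin n) C) v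
    left_inv := fun v => by
      show Matrix.mulVec (↑X⁻¹ : Matrix (Fin n) (Fin n) C)
        (Matrix.mulVec (↑X : Matrix (Fin n) (Fin n) C) v) = v
      erw [Matrix.mulVec_mulVec, X.inv_mul, Matrix.one_mulVec]
    right_inv := fun v => by
      show Matrix.mulVec (↑X : Matrix (Fin n) (Fin n) C)
        (Matrix.mulVec (↑X⁻¹ : Matrix (Fin n) (Fin n) C) v) = v
      erw [Matrix.mulVec_mulVec, X.mul_inv, Matrix.one_mulVec] }

lemma alg_mulVec (k : K) (v : Fin n → C) :
    (algebraMap K (Matrix (Fin n) (Fin n) C) k).mulVec v = algebraMap K C k • v := by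
  funext j
  rw [Matrix.algebraMap_eq_diagonal, Matrix.mulVec_diagonal]
  simp [Algebra.smul_def]

/-- A linear equivalence of representations over `K` itself gives a simultaneous
conjugation. -/
lemma equiv_to_units (e : Rep K A ≃ₗ[FreeAlgebra K I] Rep K B) :
    ∃ Q : (Matrix (Fin n) (Fin n) K)ˣ,
      ∀ i, (Q : Matrix (Fin n) (Fin n) K) * A i * (↑Q⁻¹ : Matrix (Fin n) (Fin n) K) = B i := by
  have hsm : ∀ (k : K) (v : Rep K A), e (k • v) = k • e v := by
    intro k v
    have h1 : (k • v : Rep K A) = (algebraMap K (FreeAlgebra K I) k) • v := by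
      erw [rep_smul, AlgHom.commutes, alg_mulVec]
      show _ = (algebraMap K K k) • v
      simp [Algebra.algebraMap_self]
    have h2 : (k • e v : Rep K B) = (algebraMap K (FreeAlgebra K I) k) • e v := by
      erw [rep_smul, AlgHom.commutes, alg_mulVec]
      show _ = (algebraMap K K k) • e v
      simp [Algebra.algebraMap_self]
    rw [h1, h2]; exact e.map_smul _ _
  let eK : (Fin n → K) ≃ₗ[K] (Fin n → K) :=
    { toFun := fun v => e v
      invFun := fun v => e.symm v
      map_add' := fun u v => e.map_add u v
      map_smul' := fun k v => hsm k v
      left_inv := fun v => e.symm_apply_apply v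
      right_inv := fun v => e.apply_symm_apply v }
  let X := LinearMap.toMatrix' (eK : (Fin n → K) →ₗ[K] (Fin n → K))
  let X' := LinearMap.toMatrix' (eK.symm : (Fin n → K) →ₗ[K] (Fin n → K))
  have hc1 : ((eK : (Fin n → K) →ₗ[K] (Fin n → K)) ∘ₗ (eK.symm : (Fin n → K) →ₗ[K] (Fin n → K)))
      = LinearMap.id := by
    apply LinearMap.ext; intro v
    exact e.apply_symm_apply v
  have hc2 : ((eK.symm : (Fin n → K) →ₗ[K] (Fin n → K)) ∘ₗ (eK : (Fin n → K) →ₗ[K] (Fin n → K)))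
      = LinearMap.id := by
    apply LinearMap.ext; intro v
    exact e.symm_apply_apply v
  have h1 : X * X' = 1 := by
    rw [show X * X' = LinearMap.toMatrix' ((eK : (Fin n → K) →ₗ[K] _) ∘ₗ (eK.symm : _ →ₗ[K] _))
      from (LinearMap.toMatrix'_comp _ _).symm, hc1]
    exact LinearMap.toMatrix'_id
  have h2 : X' * X = 1 := by
    rw [show X' * X = LinearMap.toMatrix' ((eK.symm : (Fin n → K) →ₗ[K] _) ∘ₗ (eK : _ →ₗ[K] _))
      from (LinearMap.toMatrix'_comp _ _).symm, hc2]
    exact LinearMap.toMatrix'_id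
  have hiota : ∀ (i : I) (v : Rep K A), (FreeAlgebra.ι K i) • v = (A i).mulVec v := by
    intro i v
    rw [rep_smul, phi_iota]
    congr 1
  have hiotaB : ∀ (i : I) (v : Rep K B), (FreeAlgebra.ι K i) • v = (B i).mulVec v := by
    intro i v
    rw [rep_smul, phi_iota]
    congr 1
  have hcomm : ∀ i, X * A i = B i * X := by
    intro i
    have : ∀ v : Fin n → K, eK ((A i).mulVec v) = (B i).mulVec (eK v) := by
      intro v
      have := e.map_smul (FreeAlgebra.ι K i) v
      erw [hiota, hiotaB] at this
      exact this
    have hXA : X * A i = LinearMap.toMatrix'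
        ((eK : (Fin n → K) →ₗ[K] _) ∘ₗ Matrix.toLin' (A i)) := by
      rw [LinearMap.toMatrix'_comp, LinearMap.toMatrix'_toLin']
    have hBX : B i * X = LinearMap.toMatrix'
        (Matrix.toLin' (B i) ∘ₗ (eK : (Fin n → K) →ₗ[K] _)) := by
      rw [LinearMap.toMatrix'_comp, LinearMap.toMatrix'_toLin']
    rw [hXA, hBX]
    congr 1
    apply LinearMap.ext
    intro v
    simp only [LinearMap.comp_apply, Matrix.toLin'_apply]
    exact this v
  refine ⟨⟨X, X', h1, h2⟩, fun i => ?_⟩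
  show X * A i * X' = B i
  rw [hcomm i, mul_assoc, h1, mul_one]

end Bridge



section Count

universe v
variable (R : Type*) [Ring R]

/-- Number of injective linear maps. -/
noncomputable def injCard (Z M : Type v) [AddCommGroup Z] [Module R Z]
    [AddCommGroup M] [Module R M] : ℕ :=
  Nat.card {f : Z →ₗ[R] M // Function.Injective f}

variable {R}

lemma injCard_congr {Z Z' M : Type v} [AddCommGroup Z] [Module R Z] [AddCommGroup Z']
    [Module R Z'] [AddCommGroup M] [Module R M] (e : Z ≃ₗ[R] Z') :
    injCard R Z M = injCard R Z' M := by
  refine Nat.card_congr ⟨fun f => ⟨f.1 ∘ₗ (e.symm : Z' →ₗ[R] Z), f.2.comp e.symm.injective⟩,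
    fun f => ⟨f.1 ∘ₗ (e : Z →ₗ[R] Z'), f.2.comp e.injective⟩, fun f => ?_, fun f => ?_⟩ <;>
  · apply Subtype.ext
    apply LinearMap.ext
    intro z
    simp

private lemma heq_aux {Z M : Type v} [AddCommGroup Z] [Module R Z] [AddCommGroup M] [Module R M]
    {W W' : Submodule R Z} (h : W = W')
    (u : {f : (Z ⧸ W) →ₗ[R] M // Function.Injective f})
    (x : {f : (Z ⧸ W') →ₗ[R] M // Function.Injective f})
    (hc : u.1 ∘ₗ W.mkQ = x.1 ∘ₗ W'.mkQ) : HEq u x := by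
  subst h
  exact heq_of_eq (Subtype.ext (Submodule.linearMap_qext _ hc))

/-- Homomorphisms are classified by a kernel and an injective map from the quotient. -/
noncomputable def homEquiv (Z M : Type v) [AddCommGroup Z] [Module R Z]
    [AddCommGroup M] [Module R M] :
    (Z →ₗ[R] M) ≃ Σ W : Submodule R Z, {f : (Z ⧸ W) →ₗ[R] M // Function.Injective f} where
  toFun f := ⟨LinearMap.ker f, (LinearMap.ker f).liftQ f le_rfl, by
    rw [← LinearMap.ker_eq_bot]
    exact Submodule.ker_liftQ_eq_bot _ _ _ le_rfl⟩
  invFun x := x.2.1 ∘ₗ x.1.mkQ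
  left_inv f := Submodule.liftQ_mkQ _ _ _
  right_inv := by
    rintro ⟨W, f, hf⟩
    have hker : LinearMap.ker (f ∘ₗ W.mkQ) = W := by
      rw [LinearMap.ker_comp, LinearMap.ker_eq_bot.mpr hf, Submodule.comap_bot,
        Submodule.ker_mkQ]
    refine Sigma.ext hker (heq_aux hker _ _ ?_)
    exact Submodule.liftQ_mkQ _ _ _

lemma hom_card (Z M : Type v) [AddCommGroup Z] [Module R Z] [AddCommGroup M] [Module R M]
    [Finite Z] [Finite M] [Fintype (Submodule R Z)] :
    Nat.card (Z →ₗ[R] M) = ∑ W : Submodule R Z, injCard R (Z ⧸ W) M := by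
  haveI : ∀ W : Submodule R Z, Finite (Z ⧸ W) :=
    fun W => Finite.of_surjective _ (Submodule.mkQ_surjective W)
  haveI : ∀ W : Submodule R Z, Finite ((Z ⧸ W) →ₗ[R] M) :=
    fun W => Finite.of_injective _ (DFunLike.coe_injective)
  letI : ∀ W : Submodule R Z, Fintype {f : (Z ⧸ W) →ₗ[R] M // Function.Injective f} :=
    fun W => Fintype.ofFinite _
  rw [Nat.card_congr (homEquiv Z M), Nat.card_eq_fintype_card, Fintype.card_sigma]
  apply Finset.sum_congr rfl
  intro W _
  rw [injCard, Nat.card_eq_fintype_card]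

lemma injCard_eq_of_homCard (M N : Type v) [AddCommGroup M] [Module R M]
    [AddCommGroup N] [Module R N] [Finite M] [Finite N]
    (H : ∀ (Z : Type v) [AddCommGroup Z] [Module R Z], Finite Z →
      Nat.card (Z →ₗ[R] M) = Nat.card (Z →ₗ[R] N)) :
    ∀ (Z : Type v) [AddCommGroup Z] [Module R Z], Finite Z →
      injCard R Z M = injCard R Z N := by
  suffices h : ∀ (c : ℕ) (Z : Type v) (i1 : AddCommGroup Z) (i2 : Module R Z)
      (i3 : Finite Z), Nat.card Z ≤ c → injCard R Z M = injCard R Z N by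
    intro Z _ _ hZ
    exact h (Nat.card Z) Z _ _ hZ le_rfl
  intro c
  induction c with
  | zero =>
    intro Z _ _ _ hc
    haveI : Nonempty Z := ⟨0⟩
    have : 0 < Nat.card Z := Nat.card_pos
    omega
  | succ c IH =>
    intro Z _ _ _ hc
    haveI : ∀ W : Submodule R Z, Finite (Z ⧸ W) :=
      fun W => Finite.of_surjective _ (Submodule.mkQ_surjective W)
    haveI : Finite (Submodule R Z) :=
      Finite.of_injective (fun W => (W : Set Z)) SetLike.coe_injective
    letI : Fintype (Submodule R Z) := Fintype.ofFinite _
    letI : DecidableEq (Submodule R Z) := Classical.decEq _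
    have hM := hom_card (R := R) Z M
    have hN := hom_card (R := R) Z N
    rw [H Z ‹Finite Z›, hN] at hM
    -- decompose both sums at ⊥
    have hbot : (⊥ : Submodule R Z) ∈ (Finset.univ : Finset (Submodule R Z)) :=
      Finset.mem_univ _
    rw [← Finset.add_sum_erase _ _ hbot, ← Finset.add_sum_erase _ _ hbot] at hM
    have hsum : ∑ W ∈ Finset.univ.erase (⊥ : Submodule R Z), injCard R (Z ⧸ W) M
        = ∑ W ∈ Finset.univ.erase (⊥ : Submodule R Z), injCard R (Z ⧸ W) N := by
      apply Finset.sum_congr rfl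
      intro W hW
      have hWne : W ≠ ⊥ := Finset.ne_of_mem_erase hW
      have hlt : Nat.card (Z ⧸ W) < Nat.card Z := by
        have hle : Nat.card (Z ⧸ W) ≤ Nat.card Z :=
          Nat.card_le_card_of_surjective _ (Submodule.mkQ_surjective W)
        rcases hle.lt_or_eq with h | h
        · exact h
        · exfalso
          have hb : Function.Bijective (W.mkQ) :=
            (Nat.bijective_iff_surjective_and_card _).mpr
              ⟨Submodule.mkQ_surjective W, h.symm⟩
          have : W = ⊥ := by
            rw [← Submodule.ker_mkQ W, LinearMap.ker_eq_bot.mpr hb.injective]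
          exact hWne this
      exact (IH (Z ⧸ W) _ _ inferInstance (by omega))
    rw [hsum] at hM
    have hbotEq := (Nat.add_right_cancel hM).symm
    have e := Submodule.quotEquivOfEqBot (⊥ : Submodule R Z) rfl
    rw [injCard_congr e, injCard_congr e] at hbotEq
    exact hbotEq

lemma equiv_of_homCard (M N : Type v) [AddCommGroup M] [Module R M]
    [AddCommGroup N] [Module R N] [Finite M] [Finite N]
    (hcard : Nat.card M = Nat.card N)
    (H : ∀ (Z : Type v) [AddCommGroup Z] [Module R Z], Finite Z →
      Nat.card (Z →ₗ[R] M) = Nat.card (Z →ₗ[R] N)) :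
    Nonempty (M ≃ₗ[R] N) := by
  have h := injCard_eq_of_homCard M N H M ‹Finite M›
  haveI : Finite (M →ₗ[R] M) := Finite.of_injective _ (DFunLike.coe_injective)
  haveI : Finite (M →ₗ[R] N) := Finite.of_injective _ (DFunLike.coe_injective)
  have hpos : 0 < injCard R M M := by
    rw [injCard]
    haveI : Nonempty {f : M →ₗ[R] M // Function.Injective f} :=
      ⟨⟨LinearMap.id, fun _ _ h => h⟩⟩
    exact Nat.card_pos
  rw [h] at hpos
  obtain ⟨⟨f, hf⟩⟩ := (Nat.card_pos_iff.mp hpos).1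
  have hbij : Function.Bijective f :=
    (Nat.bijective_iff_injective_and_card _).mpr ⟨hf, hcard⟩
  exact ⟨LinearEquiv.ofBijective f hbij⟩

end Count



variable {K : Type*} [Field K] {n : ℕ} {I : Type*}

/-- The space of matrices intertwining `A` and `B`. -/
def solSpace (A B : I → Matrix (Fin n) (Fin n) K) :
    Submodule K (Matrix (Fin n) (Fin n) K) where
  carrier := {X | ∀ i, X * A i = B i * X}
  add_mem' := fun {X} {Y} hX hY i => by rw [add_mul, mul_add, hX i, hY i]
  zero_mem' := fun i => by rw [zero_mul, mul_zero]
  smul_mem' := fun c X hX i => by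
    rw [smul_mul_assoc, mul_smul_comm, hX i]

lemma span_solutions {L : Type*} [Field L] [Algebra K L]
    (A B : I → Matrix (Fin n) (Fin n) K) {P : Matrix (Fin n) (Fin n) L}
    (hP : ∀ i, P * (A i).map (algebraMap K L) = (B i).map (algebraMap K L) * P) :
    P ∈ Submodule.span L
      ((fun X : Matrix (Fin n) (Fin n) K => X.map (algebraMap K L)) '' (solSpace A B)) := by
  classical
  let b := Module.Basis.ofVectorSpace K L
  let Xt : ↥(Module.Basis.ofVectorSpaceIndex K L) → Matrix (Fin n) (Fin n) K :=
    fun t => Matrix.of fun j k => b.repr (P j k) t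
  have hXt : ∀ t, Xt t ∈ solSpace A B := by
    intro t i
    ext j k
    rw [Matrix.mul_apply, Matrix.mul_apply]
    have h1 : ((P * (A i).map (algebraMap K L)) j k) = ((B i).map (algebraMap K L) * P) j k := by
      rw [hP i]
    rw [Matrix.mul_apply, Matrix.mul_apply] at h1
    have e1 : ∑ l, P j l * ((A i).map (algebraMap K L)) l k = ∑ l, (A i l k) • P j l := by
      apply Finset.sum_congr rfl; intro l _
      rw [Matrix.map_apply, Algebra.smul_def, mul_comm]
    have e2 : ∑ l, ((B i).map (algebraMap K L)) j l * P l k = ∑ l, (B i j l) • P l k := by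
      apply Finset.sum_congr rfl; intro l _
      rw [Matrix.map_apply, Algebra.smul_def]
    rw [e1, e2] at h1
    have h2 := congrArg (fun x => b.repr x t) h1
    simp only [map_sum, _root_.map_smul, Finsupp.coe_finset_sum, Finset.sum_apply,
      Finsupp.smul_apply] at h2
    simpa [Xt, smul_eq_mul, mul_comm] using h2
  -- finite support
  let T : Finset ↥(Module.Basis.ofVectorSpaceIndex K L) :=
    Finset.univ.biUnion (fun p : Fin n × Fin n => (b.repr (P p.1 p.2)).support)
  have hsum : P = ∑ t ∈ T, b t • (Xt t).map (algebraMap K L) := by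
    ext j k
    rw [Matrix.sum_apply]
    have : ∀ t ∈ T, (b t • (Xt t).map (algebraMap K L)) j k
        = (b.repr (P j k) t) • b t := by
      intro t _
      rw [Matrix.smul_apply, Matrix.map_apply, smul_eq_mul, Algebra.smul_def, mul_comm]
      rfl
    rw [Finset.sum_congr rfl this]
    have hsupp : (b.repr (P j k)).support ⊆ T :=
      Finset.subset_biUnion_of_mem (fun p : Fin n × Fin n => (b.repr (P p.1 p.2)).support)
        (Finset.mem_univ (j, k))
    rw [← Finset.sum_subset hsupp (fun t _ ht => by
      rw [Finsupp.notMem_support_iff] at ht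
      rw [ht, zero_smul])]
    conv_lhs => rw [← b.linearCombination_repr (P j k)]
    rw [Finsupp.linearCombination_apply, Finsupp.sum]
  rw [hsum]
  apply Submodule.sum_mem
  intro t _
  apply Submodule.smul_mem
  apply Submodule.subset_span
  exact ⟨Xt t, hXt t, rfl⟩

lemma det_poly_eval {m : ℕ} (w : Fin m → Matrix (Fin n) (Fin n) K)
    (C' : Type*) [CommRing C'] [Algebra K C'] (c : Fin m → C') :
    MvPolynomial.aeval c
      (∑ j, (MvPolynomial.X j : MvPolynomial (Fin m) K) •
        (w j).map (MvPolynomial.C : K →+* MvPolynomial (Fin m) K)).det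
      = (∑ j, c j • (w j).map (algebraMap K C')).det := by
  have h := RingHom.map_det
    ((MvPolynomial.aeval c : MvPolynomial (Fin m) K →ₐ[K] C') :
      MvPolynomial (Fin m) K →+* C')
    (∑ j, (MvPolynomial.X j : MvPolynomial (Fin m) K) •
      (w j).map (MvPolynomial.C : K →+* MvPolynomial (Fin m) K))
  rw [show ((MvPolynomial.aeval c : MvPolynomial (Fin m) K →ₐ[K] C') :
      MvPolynomial (Fin m) K →+* C') = (MvPolynomial.aeval c).toRingHom from rfl] at h
  refine Eq.trans h ?_
  congr 1
  ext j' k'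
  simp only [RingHom.mapMatrix_apply, Matrix.map_apply, Matrix.sum_apply, Matrix.smul_apply,
    map_sum, smul_eq_mul, _root_.map_mul, AlgHom.toRingHom_eq_coe, RingHom.coe_coe,
    MvPolynomial.aeval_X, MvPolynomial.aeval_C]

lemma infiniteCase [Infinite K] {L : Type*} [Field L] [Algebra K L]
    (A B : I → Matrix (Fin n) (Fin n) K) (P : (Matrix (Fin n) (Fin n) L)ˣ)
    (hP : ∀ i, (P : Matrix (Fin n) (Fin n) L) * (A i).map (algebraMap K L)
        = (B i).map (algebraMap K L) * P) :
    ∃ Q : (Matrix (Fin n) (Fin n) K)ˣ,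
      ∀ i, (Q : Matrix (Fin n) (Fin n) K) * A i * (↑Q⁻¹ : Matrix (Fin n) (Fin n) K) = B i := by
  classical
  let V := solSpace A B
  let m := Module.finrank K V
  let v : Module.Basis (Fin m) K V := Module.finBasis K V
  have hmem : (↑P : Matrix (Fin n) (Fin n) L) ∈ Submodule.span L
      (Set.range fun j : Fin m => ((v j : Matrix (Fin n) (Fin n) K)).map (algebraMap K L)) := by
    have h1 := span_solutions A B hP
    refine Submodule.span_le.mpr ?_ h1
    rintro _ ⟨X, hX, rfl⟩
    have hXr := Module.Basis.sum_repr v ⟨X, hX⟩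
    have : X = ∑ j, (v.repr ⟨X, hX⟩ j) • (v j : Matrix (Fin n) (Fin n) K) := by
      have := congrArg (Subtype.val) hXr
      simpa only [Submodule.coe_sum, Submodule.coe_smul] using this.symm
    show (X.map (algebraMap K L)) ∈
      (Submodule.span L (Set.range fun j : Fin m =>
        ((v j : Matrix (Fin n) (Fin n) K)).map (algebraMap K L)) : Set _)
    rw [SetLike.mem_coe, this]
    have hmapsum : (∑ j, (v.repr ⟨X, hX⟩ j) • (v j : Matrix (Fin n) (Fin n) K)).map
        (algebraMap K L) = ∑ j, (algebraMap K L (v.repr ⟨X, hX⟩ j)) •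
          ((v j : Matrix (Fin n) (Fin n) K)).map (algebraMap K L) := by
      ext j' k'
      rw [Matrix.map_apply, Matrix.sum_apply, Matrix.sum_apply, map_sum]
      apply Finset.sum_congr rfl
      intro j _
      rw [Matrix.smul_apply, Matrix.smul_apply, smul_eq_mul, smul_eq_mul, _root_.map_mul,
        Matrix.map_apply]
    rw [hmapsum]
    apply Submodule.sum_mem
    intro j _
    exact Submodule.smul_mem _ _ (Submodule.subset_span ⟨j, rfl⟩)
  obtain ⟨c, hc⟩ := (Submodule.mem_span_range_iff_exists_fun L).mp hmem
  let w : Fin m → Matrix (Fin n) (Fin n) K := fun j => (v j : Matrix (Fin n) (Fin n) K)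
  let q : MvPolynomial (Fin m) K :=
    (∑ j, (MvPolynomial.X j : MvPolynomial (Fin m) K) •
      (w j).map (MvPolynomial.C : K →+* MvPolynomial (Fin m) K)).det
  have hqL : MvPolynomial.aeval c q = (↑P : Matrix (Fin n) (Fin n) L).det := by
    rw [show MvPolynomial.aeval c q = (∑ j, c j • (w j).map (algebraMap K L)).det from
      det_poly_eval w L c]
    rw [hc]
  have hq : q ≠ 0 := by
    intro h
    have : (↑P : Matrix (Fin n) (Fin n) L).det = 0 := by
      rw [← hqL, h, map_zero]
    exact ((Matrix.isUnit_iff_isUnit_det _).mp P.isUnit).ne_zero this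
  have hex : ∃ k : Fin m → K, MvPolynomial.eval k q ≠ 0 := by
    by_contra h
    push_neg at h
    exact hq (MvPolynomial.funext (fun x => by rw [h x, map_zero]))
  obtain ⟨k, hk⟩ := hex
  let Y : Matrix (Fin n) (Fin n) K := ∑ j, k j • w j
  have haev : MvPolynomial.aeval k q = MvPolynomial.eval k q := by
    rw [MvPolynomial.aeval_def, Algebra.algebraMap_self]
    rfl
  have hYdet : Y.det ≠ 0 := by
    have h := det_poly_eval w K k
    rw [haev] at h
    have hmap : ∀ j : Fin m, (w j).map (algebraMap K K) = w j := by
      intro j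
      rw [Algebra.algebraMap_self]
      exact Matrix.map_id _
    simp only [hmap] at h
    rw [← h]
    exact hk
  have hYV : Y ∈ solSpace A B := by
    apply Submodule.sum_mem
    intro j _
    exact Submodule.smul_mem _ _ (SetLike.coe_mem (v j))
  have hU : IsUnit Y := (Matrix.isUnit_iff_isUnit_det Y).mpr (isUnit_iff_ne_zero.mpr hYdet)
  obtain ⟨u, hu⟩ := hU
  refine ⟨u, fun i => ?_⟩
  have h1 : Y * A i = B i * Y := hYV i
  calc (↑u : Matrix (Fin n) (Fin n) K) * A i * ↑u⁻¹
      = Y * A i * ↑u⁻¹ := by rw [hu]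
    _ = B i * Y * ↑u⁻¹ := by rw [h1]
    _ = B i * ((↑u : Matrix (Fin n) (Fin n) K) * ↑u⁻¹) := by rw [mul_assoc, hu]
    _ = B i := by rw [Units.mul_inv, mul_one]


variable {K : Type*} [Field K] {n : ℕ} {I : Type*}

lemma alg_smul_rep (C : Type*) [CommRing C] [Algebra K C] (A : I → Matrix (Fin n) (Fin n) K)
    (k : K) (v : Rep C A) :
    (algebraMap K (FreeAlgebra K I) k) • v = (algebraMap K C k) • v := by
  rw [rep_smul, AlgHom.commutes]
  exact alg_mulVec C k v

section BaseChange

variable (F : Type*) [Field F] [Algebra K F] [FiniteDimensional K F]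
variable (A : I → Matrix (Fin n) (Fin n) K)

noncomputable def bcFun (v : Rep F A) : Fin (Module.finrank K F) → Rep K A :=
  fun t j => (Module.finBasis K F).repr (v j) t

lemma bcFun_smul (r : FreeAlgebra K I) (v : Rep F A) :
    bcFun F A (r • v) = r • bcFun F A v := by
  induction r using FreeAlgebra.induction generalizing v with
  | grade0 k =>
    rw [alg_smul_rep]
    funext t j
    show (Module.finBasis K F).repr ((algebraMap K F k • v) j) t
      = ((algebraMap K (FreeAlgebra K I) k) • bcFun F A v) t j
    have h1 : (algebraMap K F k • v) j = k • (v j) := by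
      show algebraMap K F k • (v j) = k • v j
      rw [algebraMap_smul]
    have h2 : ((algebraMap K (FreeAlgebra K I) k) • bcFun F A v) t j
        = k • (bcFun F A v t j) := by
      rw [show ((algebraMap K (FreeAlgebra K I) k) • bcFun F A v) t
        = (algebraMap K (FreeAlgebra K I) k) • (bcFun F A v t) from rfl, alg_smul_rep]
      rfl
    rw [h1, h2, _root_.map_smul]
    rfl
  | grade1 i =>
    rw [rep_smul, phi_iota]
    funext t j
    show (Module.finBasis K F).repr (((A i).map (algebraMap K F)).mulVec v j) t
      = ((FreeAlgebra.ι K i) • bcFun F A v) t j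
    have hR : ((FreeAlgebra.ι K i) • bcFun F A v) t j
        = ∑ k, A i j k * bcFun F A v t k := by
      show ((FreeAlgebra.ι K i) • bcFun F A v) t j = _
      rw [show ((FreeAlgebra.ι K i) • bcFun F A v) t = (FreeAlgebra.ι K i) • (bcFun F A v t)
        from rfl]
      rw [rep_smul, phi_iota]
      show (((A i).map (algebraMap K K)).mulVec (bcFun F A v t)) j = _
      erw [Matrix.mulVec, dotProduct]
      apply Finset.sum_congr rfl
      intro k _
      rw [Matrix.map_apply]
      congr 1
    rw [hR]
    rw [show ((A i).map (algebraMap K F)).mulVec v j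
      = ∑ k, algebraMap K F (A i j k) * v k from by
        erw [Matrix.mulVec, dotProduct]
        apply Finset.sum_congr rfl
        intro k _
        rw [Matrix.map_apply]]
    rw [show (∑ k, algebraMap K F (A i j k) * v k) = ∑ k, (A i j k) • v k from by
      apply Finset.sum_congr rfl
      intro k _
      rw [Algebra.smul_def]]
    rw [map_sum]
    rw [Finsupp.coe_finset_sum, Finset.sum_apply]
    apply Finset.sum_congr rfl
    intro k _
    rw [_root_.map_smul, Finsupp.smul_apply, smul_eq_mul]
    rfl
  | mul a b ha hb =>
    rw [mul_smul, ha, hb, mul_smul]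
  | add a b ha hb =>
    rw [add_smul, add_smul, ← ha, ← hb]
    funext t j
    show (Module.finBasis K F).repr ((a • v + b • v) j) t = _
    rw [show (a • v + b • v) j = (a • v) j + (b • v) j from rfl, map_add]
    rfl

/-- Base change: `F^n` with the `A`-action is isomorphic to `d` copies of `K^n`. -/
noncomputable def baseChange : Rep F A ≃ₗ[FreeAlgebra K I] (Fin (Module.finrank K F) → Rep K A) where
  toFun := bcFun F A
  map_add' u v := by
    funext t j
    show (Module.finBasis K F).repr ((u + v) j) t = _
    rw [show (u + v) j = u j + v j from rfl, map_add]
    rfl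
  map_smul' r v := bcFun_smul F A r v
  invFun w := fun j => (Module.finBasis K F).equivFun.symm (fun t => w t j)
  left_inv v := by
    funext j
    show (Module.finBasis K F).equivFun.symm (fun t => (Module.finBasis K F).repr (v j) t) = v j
    rw [Module.Basis.equivFun_symm_apply]
    exact Module.Basis.sum_repr _ (v j)
  right_inv w := by
    funext t j
    show (Module.finBasis K F).repr ((Module.finBasis K F).equivFun.symm (fun t' => w t' j)) t
      = w t j
    rw [show ((Module.finBasis K F).repr ((Module.finBasis K F).equivFun.symm
        (fun t' => w t' j))) t
      = (Module.finBasis K F).equivFun ((Module.finBasis K F).equivFun.symm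
        (fun t' => w t' j)) t from rfl]
    rw [LinearEquiv.apply_symm_apply]

end BaseChange

section HomEquivs

variable {R M N Z : Type*} [Ring R] [AddCommGroup M] [Module R M] [AddCommGroup N] [Module R N]
  [AddCommGroup Z] [Module R Z]

def piHomEquiv (d : ℕ) : (Z →ₗ[R] (Fin d → M)) ≃ (Fin d → (Z →ₗ[R] M)) where
  toFun f t := (LinearMap.proj t) ∘ₗ f
  invFun g := LinearMap.pi g
  left_inv f := by
    apply LinearMap.ext
    intro z
    funext t
    simp [LinearMap.pi_apply]
  right_inv g := by
    funext t
    apply LinearMap.ext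
    intro z
    simp [LinearMap.pi_apply]

def compHomEquiv (e : M ≃ₗ[R] N) : (Z →ₗ[R] M) ≃ (Z →ₗ[R] N) where
  toFun f := (e : M →ₗ[R] N) ∘ₗ f
  invFun f := (e.symm : N →ₗ[R] M) ∘ₗ f
  left_inv f := by
    apply LinearMap.ext
    intro z
    simp
  right_inv f := by
    apply LinearMap.ext
    intro z
    simp

end HomEquivs


section Final

universe u w

variable {K : Type u} [Field K] {n : ℕ} {I : Type w}

lemma finiteCase [Finite K] (F : Type*) [Field F] [Algebra K F] [Module.Finite K F]
    (A B : I → Matrix (Fin n) (Fin n) K) (P : (Matrix (Fin n) (Fin n) F)ˣ)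
    (hP : ∀ i, (P : Matrix (Fin n) (Fin n) F) * (A i).map (algebraMap K F)
        = (B i).map (algebraMap K F) * P) :
    ∃ Q : (Matrix (Fin n) (Fin n) K)ˣ,
      ∀ i, (Q : Matrix (Fin n) (Fin n) K) * A i * (↑Q⁻¹ : Matrix (Fin n) (Fin n) K) = B i := by
  haveI : Finite F := Module.finite_of_finite K
  have hdpos : Module.finrank K F ≠ 0 := (Module.finrank_pos).ne'
  let R := FreeAlgebra K I
  let eF : Rep F A ≃ₗ[FreeAlgebra K I] Rep F B := matEquiv F A B P hP
  let E : (Fin (Module.finrank K F) → Rep K A) ≃ₗ[FreeAlgebra K I]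
      (Fin (Module.finrank K F) → Rep K B) :=
    ((baseChange F A).symm.trans eF).trans (baseChange F B)
  have H : ∀ (Z : Type u) [AddCommGroup Z] [Module (FreeAlgebra K I) Z], Finite Z →
      Nat.card (Z →ₗ[FreeAlgebra K I] Rep K A) = Nat.card (Z →ₗ[FreeAlgebra K I] Rep K B) := by
    intro Z _ _ _
    haveI : Finite (Z →ₗ[FreeAlgebra K I] Rep K A) :=
      Finite.of_injective _ (DFunLike.coe_injective)
    haveI : Finite (Z →ₗ[FreeAlgebra K I] Rep K B) :=
      Finite.of_injective _ (DFunLike.coe_injective)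
    have h1 : Nat.card (Z →ₗ[FreeAlgebra K I] (Fin (Module.finrank K F) → Rep K A))
        = Nat.card (Z →ₗ[FreeAlgebra K I] Rep K A) ^ (Module.finrank K F) := by
      rw [Nat.card_congr (piHomEquiv (Module.finrank K F)), Nat.card_fun,
        Nat.card_eq_fintype_card (α := Fin (Module.finrank K F)), Fintype.card_fin]
    have h2 : Nat.card (Z →ₗ[FreeAlgebra K I] (Fin (Module.finrank K F) → Rep K B))
        = Nat.card (Z →ₗ[FreeAlgebra K I] Rep K B) ^ (Module.finrank K F) := by
      rw [Nat.card_congr (piHomEquiv (Module.finrank K F)), Nat.card_fun,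
        Nat.card_eq_fintype_card (α := Fin (Module.finrank K F)), Fintype.card_fin]
    have h3 : Nat.card (Z →ₗ[FreeAlgebra K I] (Fin (Module.finrank K F) → Rep K A))
        = Nat.card (Z →ₗ[FreeAlgebra K I] (Fin (Module.finrank K F) → Rep K B)) :=
      Nat.card_congr (compHomEquiv E)
    rw [h1, h2] at h3
    exact Nat.pow_left_injective hdpos h3
  obtain ⟨e⟩ := equiv_of_homCard (Rep K A) (Rep K B) rfl H
  exact equiv_to_units A B e

end Final

end ND

/-- Simultaneous similarity of families of square matrices is invariant under
field extension. -/
theorem stmt_1 {K L : Type*} [Field K] [Field L] [Algebra K L] {n : ℕ} {I : Type*}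
    (A B : I → Matrix (Fin n) (Fin n) K) :
    (∃ P : (Matrix (Fin n) (Fin n) K)ˣ,
        ∀ i, (P : Matrix (Fin n) (Fin n) K) * A i * (P⁻¹ : Matrix (Fin n) (Fin n) K) = B i) ↔
    (∃ P : (Matrix (Fin n) (Fin n) L)ˣ,
        ∀ i, (P : Matrix (Fin n) (Fin n) L) * (A i).map (algebraMap K L) * (P⁻¹ : Matrix (Fin n) (Fin n) L) =
          (B i).map (algebraMap K L)) := by
  constructor
  · rintro ⟨P, hP⟩
    refine ⟨Units.map (RingHom.mapMatrix (algebraMap K L)).toMonoidHom P, fun i => ?_⟩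
    have hco : ((Units.map (RingHom.mapMatrix (algebraMap K L)).toMonoidHom P)⁻¹ :
        (Matrix (Fin n) (Fin n) L)ˣ)
        = Units.map (RingHom.mapMatrix (algebraMap K L)).toMonoidHom P⁻¹ := by
      rw [← map_inv]
    rw [← Matrix.coe_units_inv, hco]
    simp only [Units.coe_map, RingHom.toMonoidHom_eq_coe, MonoidHom.coe_coe,
      RingHom.mapMatrix_apply]
    rw [← Matrix.map_mul, ← Matrix.map_mul]
    rw [← hP i, Matrix.coe_units_inv]
  · rintro ⟨P, hP⟩
    have hP' : ∀ i, (P : Matrix (Fin n) (Fin n) L) * (A i).map (algebraMap K L)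
        = (B i).map (algebraMap K L) * P := by
      intro i
      have hPi : (P : Matrix (Fin n) (Fin n) L) * (A i).map (algebraMap K L)
          * (↑P⁻¹ : Matrix (Fin n) (Fin n) L) = (B i).map (algebraMap K L) := by
        rw [Matrix.coe_units_inv]
        exact hP i
      calc (P : Matrix (Fin n) (Fin n) L) * (A i).map (algebraMap K L)
          = (P : Matrix (Fin n) (Fin n) L) * (A i).map (algebraMap K L)
            * ((↑P⁻¹ : Matrix (Fin n) (Fin n) L) * (P : Matrix (Fin n) (Fin n) L)) := by
            rw [P.inv_mul, mul_one]
        _ = ((P : Matrix (Fin n) (Fin n) L) * (A i).map (algebraMap K L)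
            * (↑P⁻¹ : Matrix (Fin n) (Fin n) L)) * (P : Matrix (Fin n) (Fin n) L) := by
            rw [mul_assoc, mul_assoc, mul_assoc]
        _ = (B i).map (algebraMap K L) * P := by rw [hPi]
    cases finite_or_infinite K with
    | inr _ =>
      obtain ⟨Q, hQ⟩ := ND.infiniteCase A B P hP'
      exact ⟨Q, fun i => by rw [← Matrix.coe_units_inv]; exact hQ i⟩
    | inl _ =>
      classical
      -- entries of P and P⁻¹ generate a finite-type subalgebra
      let s : Set L := (Set.range fun p : Fin n × Fin n => (P : Matrix (Fin n) (Fin n) L) p.1 p.2)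
        ∪ (Set.range fun p : Fin n × Fin n => (↑P⁻¹ : Matrix (Fin n) (Fin n) L) p.1 p.2)
      have hs : s.Finite := (Set.finite_range _).union (Set.finite_range _)
      let S : Subalgebra K L := Algebra.adjoin K s
      haveI : Nontrivial S := ⟨⟨0, 1, fun h => zero_ne_one (congrArg Subtype.val h)⟩⟩
      have hFT : Algebra.FiniteType K S := by
        rw [← Subalgebra.fg_iff_finiteType]
        have := Subalgebra.fg_adjoin_finset (hs.toFinset : Finset L) (R := K)
        rwa [Set.Finite.coe_toFinset] at this
      obtain ⟨m, hm⟩ := Ideal.exists_maximal S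
      haveI := hm
      let F := S ⧸ m
      letI : Field F := Ideal.Quotient.field m
      haveI : Algebra.FiniteType K F :=
        Algebra.FiniteType.of_surjective (Ideal.Quotient.mkₐ K m)
          (Ideal.Quotient.mkₐ_surjective K m)
      haveI : Module.Finite K F := finite_of_finite_type_of_isJacobsonRing K F
      -- the matrices over S
      have hPmem : ∀ j k, (P : Matrix (Fin n) (Fin n) L) j k ∈ S :=
        fun j k => Algebra.subset_adjoin (Or.inl ⟨(j, k), rfl⟩)
      have hQmem : ∀ j k, (↑P⁻¹ : Matrix (Fin n) (Fin n) L) j k ∈ S :=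
        fun j k => Algebra.subset_adjoin (Or.inr ⟨(j, k), rfl⟩)
      let PS : Matrix (Fin n) (Fin n) S := Matrix.of fun j k =>
        (⟨(P : Matrix (Fin n) (Fin n) L) j k, hPmem j k⟩ : S)
      let QS : Matrix (Fin n) (Fin n) S := Matrix.of fun j k =>
        (⟨(↑P⁻¹ : Matrix (Fin n) (Fin n) L) j k, hQmem j k⟩ : S)
      have hkey : ∀ X Y : Matrix (Fin n) (Fin n) S,
          X.map (algebraMap S L) = Y.map (algebraMap S L) → X = Y := by
        intro X Y h
        ext j k
        have h2 := congrArg (fun M : Matrix (Fin n) (Fin n) L => M j k) h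
        exact h2
      have hPSmap : PS.map (algebraMap S L) = (P : Matrix (Fin n) (Fin n) L) := rfl
      have hQSmap : QS.map (algebraMap S L) = (↑P⁻¹ : Matrix (Fin n) (Fin n) L) := rfl
      have hAmap : ∀ i, ((A i).map (algebraMap K S)).map (algebraMap S L)
          = (A i).map (algebraMap K L) := by
        intro i; ext j k
        simp only [Matrix.map_apply]
        rw [← IsScalarTower.algebraMap_apply]
      have hBmap : ∀ i, ((B i).map (algebraMap K S)).map (algebraMap S L)
          = (B i).map (algebraMap K L) := by
        intro i; ext j k
        simp only [Matrix.map_apply]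
        rw [← IsScalarTower.algebraMap_apply]
      have h1S : PS * QS = 1 := by
        apply hkey
        rw [Matrix.map_mul, hPSmap, hQSmap, P.mul_inv]
        exact (Matrix.map_one _ (map_zero _) (map_one _)).symm
      have h2S : QS * PS = 1 := by
        apply hkey
        rw [Matrix.map_mul, hPSmap, hQSmap, P.inv_mul]
        exact (Matrix.map_one _ (map_zero _) (map_one _)).symm
      have hcommS : ∀ i, PS * (A i).map (algebraMap K S) = (B i).map (algebraMap K S) * PS := by
        intro i
        apply hkey
        rw [Matrix.map_mul, Matrix.map_mul, hPSmap, hAmap, hBmap]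
        exact hP' i
      -- push to F
      let π : S →+* F := Ideal.Quotient.mk m
      have hASF : ∀ i, ((A i).map (algebraMap K S)).map π = (A i).map (algebraMap K F) := by
        intro i; ext j k
        simp only [Matrix.map_apply]
        exact Ideal.Quotient.mk_algebraMap (R₁ := K) m _
      have hBSF : ∀ i, ((B i).map (algebraMap K S)).map π = (B i).map (algebraMap K F) := by
        intro i; ext j k
        simp only [Matrix.map_apply]
        exact Ideal.Quotient.mk_algebraMap (R₁ := K) m _
      have h1F : PS.map π * QS.map π = 1 := by
        rw [← Matrix.map_mul, h1S]
        exact Matrix.map_one _ (map_zero _) (map_one _)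
      have h2F : QS.map π * PS.map π = 1 := by
        rw [← Matrix.map_mul, h2S]
        exact Matrix.map_one _ (map_zero _) (map_one _)
      let u : (Matrix (Fin n) (Fin n) F)ˣ := ⟨PS.map π, QS.map π, h1F, h2F⟩
      have hu : ∀ i, (u.val : Matrix (Fin n) (Fin n) F) * (A i).map (algebraMap K F)
          = (B i).map (algebraMap K F) * u.val := by
        intro i
        show PS.map π * (A i).map (algebraMap K F) = (B i).map (algebraMap K F) * PS.map π
        rw [← hASF, ← hBSF, ← Matrix.map_mul, ← Matrix.map_mul, hcommS i]
      obtain ⟨Q, hQ⟩ := ND.finiteCase F A B u hu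
      exact ⟨Q, fun i => by rw [← Matrix.coe_units_inv]; exact hQ i⟩
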